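/- (Additive sewing lemma) Let ω be a control on [0,T] and θ > 1. Let Ξ : {(s,t) : 0 ≤ s ≤ t ≤ T} → V satisfy |Ξ(r,t) − Ξ(r,s) − Ξ(s,t)| ≤ C·ω(r,t)^θ for all r ≤ s ≤ t. Then there exists a path I : [0,T] → V with I_0 = 0 such that |I_t − I_s − Ξ(s,t)| ≤ K·C·ω(s,t)^θ for all s ≤ t, where K is a constant depending only on θ (e.g. K = 2^θ/(2^{θ-1}−1)). Moreover I is unique among paths with this property vanishing at 0. -/

import Mathlib

open Finset

namespace SewingProof

variable {V : Type*} [NormedAddCommGroup V]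

/-- Riemann sum of a germ over the first `n` intervals of a stair `p`. -/
def RS (Ξ : ℝ → ℝ → V) (p : ℕ → ℝ) (n : ℕ) : V :=
  ∑ k ∈ Finset.range n, Ξ (p k) (p (k + 1))

/-- `p` is a partition of `[a,b] ⊆ [0,T]` with `n` (possibly degenerate) intervals. -/
structure IsPart (T : ℝ) (p : ℕ → ℝ) (n : ℕ) (a b : ℝ) : Prop where
  h0 : p 0 = a
  hn : p n = b
  mono : ∀ k, k < n → p k ≤ p (k + 1)
  ha : 0 ≤ a
  hb : b ≤ T

namespace IsPart

variable {T : ℝ} {p : ℕ → ℝ} {n : ℕ} {a b : ℝ}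

lemma le (h : IsPart T p n a b) {i j : ℕ} (hij : i ≤ j) (hjn : j ≤ n) : p i ≤ p j := by
  induction j, hij using Nat.le_induction with
  | base => exact le_refl _
  | succ j hij ih => exact le_trans (ih (by omega)) (h.mono j (by omega))

lemma lower (h : IsPart T p n a b) {i : ℕ} (hi : i ≤ n) : a ≤ p i :=
  h.h0 ▸ h.le (Nat.zero_le i) hi

lemma upper (h : IsPart T p n a b) {i : ℕ} (hi : i ≤ n) : p i ≤ b :=
  h.hn ▸ h.le hi le_rfl

lemma pos (h : IsPart T p n a b) {i : ℕ} (hi : i ≤ n) : 0 ≤ p i :=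
  le_trans h.ha (h.lower hi)

lemma le_T (h : IsPart T p n a b) {i : ℕ} (hi : i ≤ n) : p i ≤ T :=
  le_trans (h.upper hi) h.hb

lemma hab (h : IsPart T p n a b) : a ≤ b := h.h0 ▸ h.hn ▸ h.le (Nat.zero_le n) le_rfl

end IsPart


/-- iterated triadic splitting tree of partitions -/
def tpts (u v : ℝ → ℝ → ℝ) : ℕ → ℝ → ℝ → ℕ → ℝ
  | 0, s, t, k => if k = 0 then s else t
  | (n+1), s, t, k =>
      if k ≤ 3 ^ n then tpts u v n s (u s t) k
      else if k ≤ 2 * 3 ^ n then tpts u v n (u s t) (v s t) (k - 3 ^ n)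
      else tpts u v n (v s t) t (k - 2 * 3 ^ n)

section Main

variable {T θ C : ℝ} {ω : ℝ → ℝ → ℝ}
variable (hnn : ∀ s t, 0 ≤ s → s ≤ t → t ≤ T → 0 ≤ ω s t)
variable (hsup : ∀ r s t, 0 ≤ r → r ≤ s → s ≤ t → t ≤ T → ω r s + ω s t ≤ ω r t)

include hnn hsup in
/-- monotonicity of the control in both variables -/
lemma omega_mono {a s t b : ℝ} (ha : 0 ≤ a) (has : a ≤ s) (hst : s ≤ t)
    (htb : t ≤ b) (hbT : b ≤ T) : ω s t ≤ ω a b := by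
  have h1 := hsup a s t ha has hst (le_trans htb hbT)
  have h2 := hsup a t b ha (le_trans has hst) htb hbT
  have h3 := hnn a s ha has (le_trans (le_trans hst htb) hbT)
  have h4 := hnn t b (le_trans ha (le_trans has hst)) htb hbT
  linarith

include hnn hsup in
/-- sum of the control over the intervals of a partition is at most the total. -/
lemma chain_sum_le {p : ℕ → ℝ} {n : ℕ} {a b : ℝ} (h : IsPart T p n a b) :
    ∑ k ∈ range n, ω (p k) (p (k + 1)) ≤ ω a b := by
  have key : ∀ j, j ≤ n → ∑ k ∈ range j, ω (p k) (p (k + 1)) ≤ ω a (p j) := by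
    intro j hj
    induction j with
    | zero =>
      simpa [h.h0] using hnn a a h.ha le_rfl (le_trans h.hab h.hb)
    | succ j ih =>
      rw [Finset.sum_range_succ]
      have h1 := ih (by omega)
      have h2 := hsup a (p j) (p (j + 1)) h.ha (h.lower (by omega)) (h.mono j (by omega))
        (h.le_T (by omega))
      linarith
  simpa [h.hn] using key n le_rfl

/-- the partition with one interior point removed -/
def rem (p : ℕ → ℝ) (j : ℕ) : ℕ → ℝ := fun k => if k < j then p k else p (k + 1)

lemma rem_isPart {p : ℕ → ℝ} {n : ℕ} {a b : ℝ} (h : IsPart T p (n + 1) a b)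
    {j : ℕ} (hj1 : 1 ≤ j) (hjn : j ≤ n) : IsPart T (rem p j) n a b := by
  constructor
  · have h1 : 0 < j := hj1
    simp only [rem, if_pos h1]
    exact h.h0
  · have h2 : ¬ (n < j) := by omega
    simp only [rem, if_neg h2]
    exact h.hn
  · intro k hk
    by_cases h1 : k + 1 < j
    · simp only [rem, if_pos (by omega : k < j), if_pos h1]
      exact h.mono k (by omega)
    · by_cases h2 : k < j
      · simp only [rem, if_pos h2, if_neg h1]
        exact h.le (by omega) (by omega)
      · simp only [rem, if_neg h2, if_neg (by omega : ¬ (k + 1 < j))]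
        exact h.mono (k + 1) (by omega)
  · exact h.ha
  · exact h.hb

/-- Riemann sum after removing interior point `j = m+1`. -/
lemma rem_RS (Ξ : ℝ → ℝ → V) (p : ℕ → ℝ) {n m : ℕ} (hmn : m + 1 ≤ n) :
    RS Ξ (rem p (m + 1)) n =
      RS Ξ p (n + 1) - Ξ (p m) (p (m + 1)) - Ξ (p (m + 1)) (p (m + 2))
        + Ξ (p m) (p (m + 2)) := by
  set f : ℕ → V := fun k => Ξ (p k) (p (k + 1)) with hf
  set g : ℕ → V := fun k => Ξ (rem p (m+1) k) (rem p (m+1) (k+1)) with hg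
  have e1 : ∀ k, k < m → g k = f k := by
    intro k hk
    have h1 : k < m + 1 := by omega
    have h2 : k + 1 < m + 1 := by omega
    simp [hg, hf, rem, h1, h2, hk, hk.le]
  have e2 : g m = Ξ (p m) (p (m + 2)) := by
    have h1 : m < m + 1 := by omega
    have h2 : ¬ (m + 1 < m + 1) := by omega
    simp [hg, rem, h1, h2]
  have e3 : ∀ k, m + 1 ≤ k → g k = f (k + 1) := by
    intro k hk
    have h1 : ¬ (k < m + 1) := by omega
    have h2 : ¬ (k + 1 < m + 1) := by omega
    simp only [hg, hf, rem, if_neg h1, if_neg h2]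
  have split2 : RS Ξ p (n + 1)
      = ((∑ k ∈ Ico 0 m, f k) + f m + f (m + 1)) + ∑ k ∈ Ico (m+2) (n+1), f k := by
    rw [RS, range_eq_Ico,
      ← Finset.sum_Ico_consecutive f (by omega : 0 ≤ m + 2) (by omega : m + 2 ≤ n + 1)]
    congr 1
    have h1 : ∑ k ∈ Ico 0 (m+2), f k = ∑ k ∈ Ico 0 (m+1), f k + f (m+1) :=
      Finset.sum_Ico_succ_top (by omega) f
    have h2 : ∑ k ∈ Ico 0 (m+1), f k = ∑ k ∈ Ico 0 m, f k + f m :=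
      Finset.sum_Ico_succ_top (by omega) f
    rw [h1, h2]
  have split1 : RS Ξ (rem p (m+1)) n
      = ((∑ k ∈ Ico 0 m, f k) + Ξ (p m) (p (m + 2))) + ∑ k ∈ Ico (m+2) (n+1), f k := by
    rw [RS, range_eq_Ico]
    rw [← Finset.sum_Ico_consecutive g (by omega : 0 ≤ m + 1) (by omega : m + 1 ≤ n)]
    congr 1
    · have h1 : ∑ k ∈ Ico 0 (m+1), g k = ∑ k ∈ Ico 0 m, g k + g m :=
        Finset.sum_Ico_succ_top (by omega) g
      rw [h1, e2]
      congr 1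
      exact Finset.sum_congr rfl (fun k hk => e1 k (by simp at hk; omega))
    · rw [Finset.sum_Ico_eq_sum_range, Finset.sum_Ico_eq_sum_range]
      have hcount : n - (m + 1) = n + 1 - (m + 2) := by omega
      rw [hcount]
      apply Finset.sum_congr rfl
      intro k _
      rw [e3 (m + 1 + k) (by omega)]
      congr 1
      omega
  rw [split1, split2]
  abel


include hnn hsup in
lemma select {p : ℕ → ℝ} {n : ℕ} {a b : ℝ} (h : IsPart T p (n + 2) a b) :
    ∃ m, m + 1 ≤ n + 1 ∧ ω (p m) (p (m + 2)) ≤ 2 * ω a b / (n + 1) := by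
  by_contra hcon
  push_neg at hcon
  set M : ℕ := (n + 2) / 2 with hM
  have hM1 : 1 ≤ M := by omega
  set q : ℕ → ℝ := fun i => p (min (2 * i) (n + 2)) with hq
  have hqpart : IsPart T q M a (q M) := by
    refine ⟨?_, rfl, ?_, h.ha, ?_⟩
    · have e : min (2 * 0) (n + 2) = 0 := by omega
      simp only [hq, e]
      exact h.h0
    · intro i hi
      exact h.le (by omega) (by omega)
    · exact h.le_T (by omega)
  have hchain := chain_sum_le hnn hsup hqpart
  have hqMb : q M ≤ b := h.upper (by omega)
  have hqM0 : 0 ≤ q M := h.pos (by omega)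
  have hle : ω a (q M) ≤ ω a b := by
    have := hsup a (q M) b h.ha (hqpart.hab) hqMb h.hb
    have := hnn (q M) b hqM0 hqMb h.hb
    linarith
  have hterm : ∀ i ∈ range M, 2 * ω a b / (n + 1) < ω (q i) (q (i + 1)) := by
    intro i hi
    simp only [Finset.mem_range] at hi
    have e1 : q i = p (2 * i) := by simp only [hq]; congr 1; omega
    have e2 : q (i + 1) = p (2 * i + 2) := by simp only [hq]; congr 1; omega
    rw [e1, e2]
    exact hcon (2 * i) (by omega)
  have hsum : (M : ℝ) * (2 * ω a b / (n + 1)) < ∑ i ∈ range M, ω (q i) (q (i + 1)) := by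
    have := Finset.sum_lt_sum_of_nonempty (Finset.nonempty_range_iff.2 (by omega)) hterm
    simpa [mul_comm] using this
  have hωnn : 0 ≤ ω a b := hnn a b h.ha h.hab h.hb
  have hMhalf : (n + 1 : ℝ) ≤ 2 * (M : ℝ) := by
    have : n + 1 ≤ 2 * M := by omega
    exact_mod_cast this
  have : ω a b ≤ (M : ℝ) * (2 * ω a b / (n + 1)) := by
    rw [div_eq_mul_inv]
    have hpos : (0:ℝ) < (n:ℝ) + 1 := by positivity
    rw [show (M:ℝ) * (2 * ω a b * ((n:ℝ)+1)⁻¹) = (2 * (M:ℝ)) * (ω a b / ((n:ℝ)+1)) by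
      field_simp]
    calc ω a b = ((n:ℝ)+1) * (ω a b / ((n:ℝ)+1)) := by field_simp
    _ ≤ (2 * (M:ℝ)) * (ω a b / ((n:ℝ)+1)) := by
        apply mul_le_mul_of_nonneg_right hMhalf (by positivity)
  linarith

variable (hθ : 1 < θ) (hC : 0 ≤ C) {Ξ : ℝ → ℝ → V}
variable (hdiag : ∀ t, 0 ≤ t → t ≤ T → ω t t = 0)
variable (hΞ : ∀ r s t, 0 ≤ r → r ≤ s → s ≤ t → t ≤ T →
      ‖Ξ r t - Ξ r s - Ξ s t‖ ≤ C * ω r t ^ θ)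

include hnn hsup hθ hC hdiag hΞ in
/-- Young's removal bound : any partition sum is close to the germ. -/
lemma removal_bound : ∀ n {p : ℕ → ℝ} {a b : ℝ}, IsPart T p n a b →
    ‖RS Ξ p n - Ξ a b‖ ≤ 2 ^ θ * (∑ j ∈ range n, ((j : ℝ) ^ θ)⁻¹) * C * ω a b ^ θ := by
  intro n
  induction n using Nat.strong_induction_on with
  | _ n ih =>
  intro p a b h
  have hωnn : 0 ≤ ω a b := hnn a b h.ha h.hab h.hb
  have hωθnn : 0 ≤ ω a b ^ θ := Real.rpow_nonneg hωnn θ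
  have hSnn : 0 ≤ ∑ j ∈ range n, ((j : ℝ) ^ θ)⁻¹ := by
    apply Finset.sum_nonneg
    intro j _
    positivity
  have h2θ : (0:ℝ) ≤ 2 ^ θ := Real.rpow_nonneg (by norm_num) θ
  match n, ih, h, hSnn with
  | 0, ih, h, hSnn => ?_
  | 1, ih, h, hSnn => ?_
  | (m + 2), ih, h, hSnn => ?_
  · -- n = 0 : a = b and Ξ a a = 0
    have hab : a = b := by rw [← h.h0, ← h.hn]
    subst hab
    have hz : ω a a = 0 := hdiag a h.ha h.hb
    have hΞz : ‖Ξ a a‖ ≤ 0 := by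
      have := hΞ a a a h.ha le_rfl le_rfl h.hb
      rw [hz, Real.zero_rpow (by positivity : θ ≠ 0)] at this
      have e : Ξ a a - Ξ a a - Ξ a a = -Ξ a a := by abel
      rw [e, norm_neg] at this
      linarith
    have : RS Ξ p 0 - Ξ a a = - Ξ a a := by simp [RS]
    rw [this, norm_neg, hz, Real.zero_rpow (by positivity : θ ≠ 0)]
    simpa using hΞz
  · -- n = 1
    have : RS Ξ p 1 = Ξ a b := by
      rw [RS, Finset.sum_range_one, h.h0, show p 1 = b from h.hn]
    rw [this]
    simp only [sub_self, norm_zero]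
    positivity
  · -- n = m + 2 : remove a point
    obtain ⟨j, hj, hjsmall⟩ := select hnn hsup h
    have hrempart : IsPart T (rem p (j + 1)) (m + 1) a b :=
      rem_isPart h (by omega) (by omega)
    have hihm := ih (m + 1) (by omega) hrempart
    have hrs := rem_RS Ξ p (n := m + 1) (m := j) (by omega)
    -- defect bound
    have hdom1 : (0:ℝ) ≤ p j := h.pos (by omega)
    have hdom2 : p j ≤ p (j + 1) := h.mono j (by omega)
    have hdom3 : p (j + 1) ≤ p (j + 2) := h.mono (j + 1) (by omega)
    have hdom4 : p (j + 2) ≤ T := h.le_T (by omega)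
    have hdefect := hΞ (p j) (p (j + 1)) (p (j + 2)) hdom1 hdom2 hdom3 hdom4
    have hωj : 0 ≤ ω (p j) (p (j + 2)) := hnn _ _ hdom1 (le_trans hdom2 hdom3) hdom4
    have hωjθ : ω (p j) (p (j + 2)) ^ θ ≤ (2 * ω a b / (m + 1)) ^ θ :=
      Real.rpow_le_rpow hωj hjsmall (by positivity)
    have hm1pos : (0:ℝ) < (m:ℝ) + 1 := by positivity
    have hpow : (2 * ω a b / (m + 1) : ℝ) ^ θ
        = 2 ^ θ * ω a b ^ θ * (((m + 1 : ℕ) : ℝ) ^ θ)⁻¹ := by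
      push_cast
      rw [Real.div_rpow (by positivity) (le_of_lt hm1pos),
        Real.mul_rpow (by norm_num) hωnn, div_eq_mul_inv]
    -- put it together
    have key : RS Ξ p (m + 2) - Ξ a b
        = (RS Ξ (rem p (j + 1)) (m + 1) - Ξ a b)
          - (Ξ (p j) (p (j + 2)) - Ξ (p j) (p (j + 1)) - Ξ (p (j + 1)) (p (j + 2))) := by
      rw [hrs]; abel
    rw [key]
    calc ‖(RS Ξ (rem p (j + 1)) (m + 1) - Ξ a b)
          - (Ξ (p j) (p (j + 2)) - Ξ (p j) (p (j + 1)) - Ξ (p (j + 1)) (p (j + 2)))‖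
        ≤ ‖RS Ξ (rem p (j + 1)) (m + 1) - Ξ a b‖
          + ‖Ξ (p j) (p (j + 2)) - Ξ (p j) (p (j + 1)) - Ξ (p (j + 1)) (p (j + 2))‖ :=
          norm_sub_le _ _
      _ ≤ 2 ^ θ * (∑ i ∈ range (m + 1), ((i : ℝ) ^ θ)⁻¹) * C * ω a b ^ θ
          + C * (2 ^ θ * ω a b ^ θ * (((m + 1 : ℕ) : ℝ) ^ θ)⁻¹) := by
          have : C * ω (p j) (p (j + 2)) ^ θ
              ≤ C * (2 ^ θ * ω a b ^ θ * (((m + 1 : ℕ) : ℝ) ^ θ)⁻¹) := by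
            rw [← hpow]
            exact mul_le_mul_of_nonneg_left (le_trans hωjθ (le_of_eq rfl)) hC
          exact add_le_add hihm (le_trans hdefect this)
      _ = 2 ^ θ * (∑ i ∈ range (m + 2), ((i : ℝ) ^ θ)⁻¹) * C * ω a b ^ θ := by
          conv_rhs => rw [Finset.sum_range_succ]
          ring


/-- tail constant for the removal bound -/
noncomputable def Bθ (θ : ℝ) : ℝ := ∑' j : ℕ, ((j : ℝ) ^ θ)⁻¹

include hnn hsup hθ hC hdiag hΞ in
lemma removal_bound' {n : ℕ} {p : ℕ → ℝ} {a b : ℝ} (h : IsPart T p n a b) :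
    ‖RS Ξ p n - Ξ a b‖ ≤ 2 ^ θ * Bθ θ * C * ω a b ^ θ := by
  have hsummable : Summable (fun j : ℕ => ((j : ℝ) ^ θ)⁻¹) :=
    Real.summable_nat_rpow_inv.2 hθ
  have hS : (∑ j ∈ range n, ((j : ℝ) ^ θ)⁻¹) ≤ Bθ θ :=
    Summable.sum_le_tsum (range n) (fun j _ => by positivity) hsummable
  have hωnn : 0 ≤ ω a b := hnn a b h.ha h.hab h.hb
  refine le_trans (removal_bound hnn hsup hθ hC hdiag hΞ n h) ?_
  have h1 : (0:ℝ) ≤ 2 ^ θ := Real.rpow_nonneg (by norm_num) θ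
  have h2 : (0:ℝ) ≤ C * ω a b ^ θ := mul_nonneg hC (Real.rpow_nonneg hωnn θ)
  calc 2 ^ θ * (∑ j ∈ range n, ((j : ℝ) ^ θ)⁻¹) * C * ω a b ^ θ
      = (∑ j ∈ range n, ((j : ℝ) ^ θ)⁻¹) * (2 ^ θ * (C * ω a b ^ θ)) := by ring
    _ ≤ Bθ θ * (2 ^ θ * (C * ω a b ^ θ)) :=
        mul_le_mul_of_nonneg_right hS (mul_nonneg h1 h2)
    _ = 2 ^ θ * Bθ θ * C * ω a b ^ θ := by ring

include hnn hsup hθ hC hdiag hΞ in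
/-- comparison of a partition with a refinement -/
lemma refine_bound {p w : ℕ → ℝ} {n m : ℕ} {a b : ℝ} (hp : IsPart T p n a b)
    (hw : IsPart T w m a b) (g : ℕ → ℕ) (hg : Monotone g) (hg0 : g 0 = 0)
    (hgn : g n = m) (hwg : ∀ i, i ≤ n → w (g i) = p i) :
    ‖RS Ξ w m - RS Ξ p n‖ ≤ 2 ^ θ * Bθ θ * C * ∑ i ∈ range n, ω (p i) (p (i + 1)) ^ θ := by
  set F : ℕ → V := fun k => Ξ (w k) (w (k + 1)) with hF
  have decomp : ∀ j, ∑ k ∈ Ico (g 0) (g j), F k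
      = ∑ i ∈ range j, ∑ k ∈ Ico (g i) (g (i + 1)), F k := by
    intro j
    induction j with
    | zero => simp
    | succ j ih =>
      rw [Finset.sum_range_succ, ← ih,
        Finset.sum_Ico_consecutive F (hg (Nat.zero_le j)) (hg (by omega))]
  have hRSw : RS Ξ w m = ∑ i ∈ range n, ∑ k ∈ Ico (g i) (g (i + 1)), F k := by
    rw [← decomp n, hg0, hgn, RS, range_eq_Ico]
  have block : ∀ i, i < n →
      ‖(∑ k ∈ Ico (g i) (g (i + 1)), F k) - Ξ (p i) (p (i + 1))‖
        ≤ 2 ^ θ * Bθ θ * C * ω (p i) (p (i + 1)) ^ θ := by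
    intro i hi
    have hgi : g i ≤ g (i + 1) := hg (by omega)
    have hgi1m : g (i + 1) ≤ m := hgn ▸ hg (by omega : i + 1 ≤ n)
    have hblockpart : IsPart T (fun k => w (g i + k)) (g (i + 1) - g i) (p i) (p (i + 1)) := by
      refine ⟨?_, ?_, ?_, hp.pos (by omega), hp.le_T (by omega)⟩
      · simpa using hwg i (by omega)
      · have e : g i + (g (i + 1) - g i) = g (i + 1) := by omega
        simp only [e]
        exact hwg (i + 1) (by omega)
      · intro k hk
        have : g i + k < m := by omega
        have := hw.mono (g i + k) this
        simpa [Nat.add_assoc] using this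
    have hblocksum : ∑ k ∈ Ico (g i) (g (i + 1)), F k
        = RS Ξ (fun k => w (g i + k)) (g (i + 1) - g i) := by
      rw [Finset.sum_Ico_eq_sum_range, RS]
      apply Finset.sum_congr rfl
      intro k _
      simp only [hF, Nat.add_assoc]
    rw [hblocksum]
    exact removal_bound' hnn hsup hθ hC hdiag hΞ hblockpart
  have hdiff : RS Ξ w m - RS Ξ p n
      = ∑ i ∈ range n, ((∑ k ∈ Ico (g i) (g (i + 1)), F k) - Ξ (p i) (p (i + 1))) := by
    rw [hRSw, RS, ← Finset.sum_sub_distrib]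
  rw [hdiff]
  calc ‖∑ i ∈ range n, ((∑ k ∈ Ico (g i) (g (i + 1)), F k) - Ξ (p i) (p (i + 1)))‖
      ≤ ∑ i ∈ range n, ‖(∑ k ∈ Ico (g i) (g (i + 1)), F k) - Ξ (p i) (p (i + 1))‖ :=
        norm_sum_le _ _
    _ ≤ ∑ i ∈ range n, 2 ^ θ * Bθ θ * C * ω (p i) (p (i + 1)) ^ θ :=
        Finset.sum_le_sum (fun i hi => block i (Finset.mem_range.1 hi))
    _ = 2 ^ θ * Bθ θ * C * ∑ i ∈ range n, ω (p i) (p (i + 1)) ^ θ := by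
        rw [Finset.mul_sum]


/-- common refinement of two partitions of the same interval -/
lemma merge_exists {p q : ℕ → ℝ} {n m : ℕ} {a b : ℝ} (hp : IsPart T p n a b)
    (hq : IsPart T q m a b) :
    ∃ (w : ℕ → ℝ) (d : ℕ) (g g' : ℕ → ℕ),
      IsPart T w d a b ∧ Monotone g ∧ g 0 = 0 ∧ g n = d ∧ (∀ i, i ≤ n → w (g i) = p i)
      ∧ Monotone g' ∧ g' 0 = 0 ∧ g' m = d ∧ (∀ i, i ≤ m → w (g' i) = q i) := by
  classical
  set F : Finset ℝ :=
    ((Finset.range (n + 1)).image p) ∪ ((Finset.range (m + 1)).image q) with hFdef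
  have hpF : ∀ i, i ≤ n → p i ∈ F := fun i hi =>
    Finset.mem_union_left _ (Finset.mem_image.2 ⟨i, Finset.mem_range.2 (by omega), rfl⟩)
  have hqF : ∀ i, i ≤ m → q i ∈ F := fun i hi =>
    Finset.mem_union_right _ (Finset.mem_image.2 ⟨i, Finset.mem_range.2 (by omega), rfl⟩)
  have haF : a ∈ F := hp.h0 ▸ hpF 0 (by omega)
  have hbF : b ∈ F := hp.hn ▸ hpF n le_rfl
  have hmemF : ∀ x ∈ F, a ≤ x ∧ x ≤ b := by
    intro x hx
    rcases Finset.mem_union.1 hx with hx | hx <;> obtain ⟨i, hi, rfl⟩ := Finset.mem_image.1 hx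
    · exact ⟨hp.lower (by simp at hi; omega), hp.upper (by simp at hi; omega)⟩
    · exact ⟨hq.lower (by simp at hi; omega), hq.upper (by simp at hi; omega)⟩
  set c : ℕ := F.card with hc
  have hc0 : 0 < c := Finset.card_pos.2 ⟨a, haF⟩
  set iso := F.orderIsoOfFin (rfl : F.card = c) with hiso
  set w : ℕ → ℝ := fun k => if h : k < c then (iso ⟨k, h⟩ : ℝ) else b with hw
  set idx : ∀ x, x ∈ F → ℕ := fun x hx => (iso.symm ⟨x, hx⟩ : Fin c).val with hidx
  have hidx_lt : ∀ x hx, idx x hx < c := fun x hx => (iso.symm ⟨x, hx⟩).isLt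
  have hw_idx : ∀ x hx, w (idx x hx) = x := by
    intro x hx
    simp only [hw, hidx, dif_pos (hidx_lt x hx)]
    rw [dif_pos (show (iso.symm ⟨x, hx⟩ : Fin c).val < c from hidx_lt x hx)]
    rw [show (⟨(iso.symm ⟨x, hx⟩ : Fin c).val, _⟩ : Fin c) = iso.symm ⟨x, hx⟩ from Fin.eta _ _]
    rw [OrderIso.apply_symm_apply]
  have hidx_mono : ∀ x hx y hy, x ≤ y → idx x hx ≤ idx y hy := by
    intro x hx y hy hxy
    simp only [hidx]
    have : (⟨x, hx⟩ : F) ≤ ⟨y, hy⟩ := hxy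
    exact iso.symm.monotone this
  have hidx_congr : ∀ x hx y hy, x = y → idx x hx = idx y hy := by
    intro x hx y hy hxy
    subst hxy
    rfl
  have hidx_a : idx a haF = 0 := by
    have h1 : idx a haF ≤ idx (iso ⟨0, hc0⟩ : F) (iso ⟨0, hc0⟩).2 :=
      hidx_mono _ _ _ _ (hmemF _ (iso ⟨0, hc0⟩).2).1
    have h2 : idx (iso ⟨0, hc0⟩ : F) (iso ⟨0, hc0⟩).2 = 0 := by
      simp only [hidx]
      rw [show (⟨(iso ⟨0, hc0⟩ : F).1, (iso ⟨0, hc0⟩).2⟩ : F) = iso ⟨0, hc0⟩ from rfl,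
        OrderIso.symm_apply_apply]
    omega
  have hidx_b : idx b hbF = c - 1 := by
    have hlt : c - 1 < c := by omega
    have h1 : idx (iso ⟨c - 1, hlt⟩ : F) (iso ⟨c - 1, hlt⟩).2 ≤ idx b hbF :=
      hidx_mono _ _ _ _ (hmemF _ (iso ⟨c - 1, hlt⟩).2).2
    have h2 : idx (iso ⟨c - 1, hlt⟩ : F) (iso ⟨c - 1, hlt⟩).2 = c - 1 := by
      simp only [hidx]
      rw [show (⟨(iso ⟨c - 1, hlt⟩ : F).1, (iso ⟨c - 1, hlt⟩).2⟩ : F) = iso ⟨c - 1, hlt⟩ from rfl,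
        OrderIso.symm_apply_apply]
    have h3 : idx b hbF < c := hidx_lt b hbF
    omega
  have hwpart : IsPart T w (c - 1) a b := by
    refine ⟨?_, ?_, ?_, hp.ha, hp.hb⟩
    · rw [← hidx_a, hw_idx]
    · rw [← hidx_b, hw_idx]
    · intro k hk
      have h1 : k < c := by omega
      have h2 : k + 1 < c := by omega
      simp only [hw, dif_pos h1, dif_pos h2]
      exact iso.monotone (by exact Fin.mk_le_mk.2 (by omega))
  refine ⟨w, c - 1,
    (fun i => if h : i ≤ n then idx (p i) (hpF i h) else c - 1),
    (fun i => if h : i ≤ m then idx (q i) (hqF i h) else c - 1),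
    hwpart, ?_, ?_, ?_, ?_, ?_, ?_, ?_, ?_⟩
  · intro i j hij
    by_cases hi : i ≤ n <;> by_cases hj : j ≤ n
    · simp only [dif_pos hi, dif_pos hj]
      exact hidx_mono _ _ _ _ (hp.le hij hj)
    · simp only [dif_pos hi, dif_neg hj]
      have := hidx_lt (p i) (hpF i hi)
      omega
    · omega
    · simp only [dif_neg hi, dif_neg hj]
      omega
  · simp only [dif_pos (by omega : 0 ≤ n)]
    rw [hidx_congr _ _ a haF hp.h0, hidx_a]
  · simp only [dif_pos (le_refl n)]
    rw [hidx_congr _ _ b hbF hp.hn, hidx_b]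
  · intro i hi
    simp only [dif_pos hi]
    exact hw_idx _ _
  · intro i j hij
    by_cases hi : i ≤ m <;> by_cases hj : j ≤ m
    · simp only [dif_pos hi, dif_pos hj]
      exact hidx_mono _ _ _ _ (hq.le hij hj)
    · simp only [dif_pos hi, dif_neg hj]
      have := hidx_lt (q i) (hqF i hi)
      omega
    · omega
    · simp only [dif_neg hi, dif_neg hj]
      omega
  · simp only [dif_pos (by omega : 0 ≤ m)]
    rw [hidx_congr _ _ a haF hq.h0, hidx_a]
  · simp only [dif_pos (le_refl m)]
    rw [hidx_congr _ _ b hbF hq.hn, hidx_b]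
  · intro i hi
    simp only [dif_pos hi]
    exact hw_idx _ _


include hnn hsup hθ in
lemma mesh_sum {r : ℕ → ℝ} {N : ℕ} {a b ε : ℝ} (hr : IsPart T r N a b)
    (hmr : ∀ k, k < N → ω (r k) (r (k + 1)) ≤ ε) (hε : 0 ≤ ε) :
    ∑ i ∈ range N, ω (r i) (r (i + 1)) ^ θ ≤ ε ^ (θ - 1) * ω a b := by
  have step : ∀ i ∈ range N, ω (r i) (r (i + 1)) ^ θ
      ≤ ε ^ (θ - 1) * ω (r i) (r (i + 1)) := by
    intro i hi
    simp only [Finset.mem_range] at hi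
    have h0i : 0 ≤ ω (r i) (r (i + 1)) :=
      hnn _ _ (hr.pos (by omega)) (hr.mono i hi) (hr.le_T (by omega))
    have e : ω (r i) (r (i + 1)) ^ θ
        = ω (r i) (r (i + 1)) ^ (θ - 1) * ω (r i) (r (i + 1)) := by
      rw [show θ = (θ - 1) + 1 by ring, Real.rpow_add_of_nonneg h0i (by linarith) zero_le_one]
      rw [Real.rpow_one]
      ring_nf
    rw [e]
    apply mul_le_mul_of_nonneg_right _ h0i
    exact Real.rpow_le_rpow h0i (hmr i hi) (by linarith)
  calc ∑ i ∈ range N, ω (r i) (r (i + 1)) ^ θ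
      ≤ ∑ i ∈ range N, ε ^ (θ - 1) * ω (r i) (r (i + 1)) := Finset.sum_le_sum step
    _ = ε ^ (θ - 1) * ∑ i ∈ range N, ω (r i) (r (i + 1)) := by rw [Finset.mul_sum]
    _ ≤ ε ^ (θ - 1) * ω a b := by
        apply mul_le_mul_of_nonneg_left (chain_sum_le hnn hsup hr) (by positivity)

include hnn hsup hθ hC hdiag hΞ in
/-- two partitions of `[a,b]` with fine mesh have close Riemann sums. -/
lemma two_partitions_bound {p q : ℕ → ℝ} {n m : ℕ} {a b : ℝ} {ε : ℝ}
    (hp : IsPart T p n a b) (hq : IsPart T q m a b) (hε : 0 ≤ ε)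
    (hmp : ∀ k, k < n → ω (p k) (p (k + 1)) ≤ ε)
    (hmq : ∀ k, k < m → ω (q k) (q (k + 1)) ≤ ε) :
    ‖RS Ξ p n - RS Ξ q m‖ ≤ 2 * (2 ^ θ * Bθ θ * C) * (ε ^ (θ - 1) * ω a b) := by
  obtain ⟨w, d, g, g', hwpart, hg, hg0, hgn, hwg, hg', hg'0, hg'm, hwg'⟩ :=
    merge_exists hp hq
  have hKnn : (0:ℝ) ≤ 2 ^ θ * Bθ θ * C := by
    have h1 : (0:ℝ) ≤ 2 ^ θ := Real.rpow_nonneg (by norm_num) θ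
    have h2 : (0:ℝ) ≤ Bθ θ := tsum_nonneg (fun j => by positivity)
    exact mul_nonneg (mul_nonneg h1 h2) hC
  have b1 := refine_bound hnn hsup hθ hC hdiag hΞ hp hwpart g hg hg0 hgn hwg
  have b2 := refine_bound hnn hsup hθ hC hdiag hΞ hq hwpart g' hg' hg'0 hg'm hwg'
  have c1 : ‖RS Ξ w d - RS Ξ p n‖ ≤ 2 ^ θ * Bθ θ * C * (ε ^ (θ - 1) * ω a b) :=
    le_trans b1 (mul_le_mul_of_nonneg_left (mesh_sum hnn hsup hθ hp hmp hε) hKnn)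
  have c2 : ‖RS Ξ w d - RS Ξ q m‖ ≤ 2 ^ θ * Bθ θ * C * (ε ^ (θ - 1) * ω a b) :=
    le_trans b2 (mul_le_mul_of_nonneg_left (mesh_sum hnn hsup hθ hq hmq hε) hKnn)
  calc ‖RS Ξ p n - RS Ξ q m‖
      = ‖(RS Ξ w d - RS Ξ q m) - (RS Ξ w d - RS Ξ p n)‖ := by
        congr 1
        abel
    _ ≤ ‖RS Ξ w d - RS Ξ q m‖ + ‖RS Ξ w d - RS Ξ p n‖ := norm_sub_le _ _
    _ ≤ 2 * (2 ^ θ * Bθ θ * C) * (ε ^ (θ - 1) * ω a b) := by linarith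


include hnn hsup hdiag in
/-- the key splitting lemma: any interval can be split into three pieces of
half the control, using continuity of the control at the diagonal. -/
lemma split_exists
    (hcont : ∀ t ∈ Set.Icc (0 : ℝ) T,
      Filter.Tendsto (fun p : ℝ × ℝ => ω p.1 p.2)
        (nhdsWithin (t, t) {p : ℝ × ℝ | 0 ≤ p.1 ∧ p.1 ≤ p.2 ∧ p.2 ≤ T})
        (nhds 0)) :
    ∀ s t : ℝ, ∃ uu vv : ℝ, 0 ≤ s → s ≤ t → t ≤ T →
      s ≤ uu ∧ uu ≤ vv ∧ vv ≤ t ∧ ω s uu ≤ ω s t / 2 ∧ ω uu vv ≤ ω s t / 2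
        ∧ ω vv t ≤ ω s t / 2 := by
  intro s t
  by_cases hdom : 0 ≤ s ∧ s ≤ t ∧ t ≤ T
  swap
  · exact ⟨s, s, fun h1 h2 h3 => absurd ⟨h1, h2, h3⟩ hdom⟩
  obtain ⟨hs0, hst, htT⟩ := hdom
  have hωst : 0 ≤ ω s t := hnn s t hs0 hst htT
  by_cases hω0 : ω s t ≤ 0
  · -- degenerate control : everything is zero
    refine ⟨s, s, fun _ _ _ => ⟨le_rfl, le_rfl, hst, ?_, ?_, ?_⟩⟩
    · rw [hdiag s hs0 (le_trans hst htT)]; linarith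
    · rw [hdiag s hs0 (le_trans hst htT)]; linarith
    · linarith
  push_neg at hω0
  -- the sup of points reachable with half the control
  set A : Set ℝ := {x | x ∈ Set.Icc s t ∧ ω s x ≤ ω s t / 2} with hA
  have hsA : s ∈ A := by
    constructor
    · exact ⟨le_rfl, hst⟩
    · rw [hdiag s hs0 (le_trans hst htT)]; linarith
  have hAne : A.Nonempty := ⟨s, hsA⟩
  have hAbdd : BddAbove A := ⟨t, fun x hx => hx.1.2⟩
  set m : ℝ := sSup A with hm
  have hsm : s ≤ m := le_csSup hAbdd hsA
  have hmt : m ≤ t := csSup_le hAne (fun x hx => hx.1.2)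
  have hm0 : 0 ≤ m := le_trans hs0 hsm
  have hmT : m ≤ T := le_trans hmt htT
  -- continuity at (m, m)
  have hcm := hcont m ⟨hm0, hmT⟩
  rw [Metric.tendsto_nhdsWithin_nhds] at hcm
  obtain ⟨δ, hδ0, hδ⟩ := hcm (ω s t / 2) (by linarith)
  -- pick u ∈ A close to m
  obtain ⟨uu, huA, huclose⟩ : ∃ x ∈ A, m - δ / 2 < x := by
    apply exists_lt_of_lt_csSup hAne
    linarith
  have hum : uu ≤ m := le_csSup hAbdd huA
  have hsu : s ≤ uu := huA.1.1
  have hut : uu ≤ t := huA.1.2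
  have hu0 : 0 ≤ uu := le_trans hs0 hsu
  have hkey : ∀ z : ℝ, uu ≤ z → z ≤ t → |z - m| < δ → ω uu z ≤ ω s t / 2 := by
    intro z huz hzt hzm
    have hmem : (uu, z) ∈ {p : ℝ × ℝ | 0 ≤ p.1 ∧ p.1 ≤ p.2 ∧ p.2 ≤ T} :=
      ⟨hu0, huz, le_trans hzt htT⟩
    have hdist : dist (uu, z) (m, m) < δ := by
      rw [Prod.dist_eq]
      simp only [Real.dist_eq]
      apply max_lt _ hzm
      rw [abs_sub_lt_iff]
      constructor <;> linarith
    have := hδ hmem hdist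
    rw [Real.dist_eq, sub_zero] at this
    calc ω uu z ≤ |ω uu z| := le_abs_self _
      _ ≤ ω s t / 2 := le_of_lt this
  by_cases hmlt : m < t
  · -- interior case
    set vv : ℝ := min (m + δ / 2) t with hv
    have hmv : m < vv := by
      apply lt_min _ hmlt
      linarith
    have hvt : vv ≤ t := min_le_right _ _
    have hsv : s ≤ vv := le_trans hsm (le_of_lt hmv)
    have hv0 : 0 ≤ vv := le_trans hs0 hsv
    have hvnA : vv ∉ A := fun hvA => absurd (le_csSup hAbdd hvA) (not_le.2 hmv)
    have hωsv : ω s t / 2 < ω s vv := by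
      by_contra hcon
      push_neg at hcon
      exact hvnA ⟨⟨hsv, hvt⟩, hcon⟩
    have hωvt : ω vv t ≤ ω s t / 2 := by
      have := hsup s vv t hs0 hsv hvt htT
      linarith
    refine ⟨uu, vv, fun _ _ _ => ⟨hsu, le_trans hum (le_of_lt hmv), hvt, huA.2, ?_, hωvt⟩⟩
    apply hkey vv (le_trans hum (le_of_lt hmv)) hvt
    rw [abs_sub_lt_iff]
    constructor
    · have : vv ≤ m + δ / 2 := min_le_left _ _
      linarith
    · linarith
  · -- boundary case : m = t
    have hmeq : m = t := le_antisymm hmt (not_lt.1 hmlt)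
    refine ⟨uu, t, fun _ _ _ => ⟨hsu, hut, le_rfl, huA.2, ?_, ?_⟩⟩
    · apply hkey t hut le_rfl
      rw [hmeq]
      simpa using hδ0
    · rw [hdiag t (le_trans hs0 hst) htT]
      linarith


variable {u v : ℝ → ℝ → ℝ}
variable (huv : ∀ s t, 0 ≤ s → s ≤ t → t ≤ T →
      s ≤ u s t ∧ u s t ≤ v s t ∧ v s t ≤ t ∧ ω s (u s t) ≤ ω s t / 2 ∧
        ω (u s t) (v s t) ≤ ω s t / 2 ∧ ω (v s t) t ≤ ω s t / 2)

include hnn hsup huv in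
lemma tpts_good : ∀ n s t, 0 ≤ s → s ≤ t → t ≤ T →
    IsPart T (tpts u v n s t) (3 ^ n) s t ∧
      ∀ k, k < 3 ^ n →
        ω (tpts u v n s t k) (tpts u v n s t (k + 1)) ≤ ω s t / 2 ^ n := by
  intro n
  induction n with
  | zero =>
    intro s t hs hst htT
    constructor
    · refine ⟨if_pos rfl, if_neg (by norm_num), ?_, hs, htT⟩
      intro k hk
      interval_cases k
      simp only [tpts, if_pos rfl, if_neg (by norm_num : ¬ (0 + 1 = 0))]
      exact hst
    · intro k hk
      interval_cases k
      simp only [tpts, if_pos rfl, if_neg (by norm_num : ¬ (0 + 1 = 0))]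
      norm_num
  | succ n ih =>
    intro s t hs hst htT
    obtain ⟨h1, h2, h3, hω1, hω2, hω3⟩ := huv s t hs hst htT
    set ua := u s t with hua
    set va := v s t with hva
    have hua0 : 0 ≤ ua := le_trans hs h1
    have huaT : ua ≤ T := le_trans (le_trans h2 h3) htT
    have hva0 : 0 ≤ va := le_trans hua0 h2
    have hvaT : va ≤ T := le_trans h3 htT
    obtain ⟨P1, M1⟩ := ih s ua hs h1 huaT
    obtain ⟨P2, M2⟩ := ih ua va hua0 h2 hvaT
    obtain ⟨P3, M3⟩ := ih va t hva0 h3 htT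
    have h3n : 1 ≤ 3 ^ n := Nat.one_le_pow _ _ (by norm_num)
    have e1 : ∀ k, k ≤ 3 ^ n → tpts u v (n+1) s t k = tpts u v n s ua k := by
      intro k hk
      simp only [tpts]
      rw [if_pos hk]
    have e2 : ∀ k, k ≤ 3 ^ n → tpts u v (n+1) s t (3 ^ n + k) = tpts u v n ua va k := by
      intro k hk
      rcases Nat.eq_zero_or_pos k with rfl | hkpos
      · simp only [tpts, Nat.add_zero]
        rw [if_pos le_rfl, P1.hn, P2.h0]
      · have hgt : ¬ (3 ^ n + k ≤ 3 ^ n) := by omega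
        have hle : 3 ^ n + k ≤ 2 * 3 ^ n := by omega
        simp only [tpts]
        rw [if_neg hgt, if_pos hle]
        congr 1
        omega
    have e3 : ∀ k, k ≤ 3 ^ n → tpts u v (n+1) s t (2 * 3 ^ n + k) = tpts u v n va t k := by
      intro k hk
      rcases Nat.eq_zero_or_pos k with rfl | hkpos
      · have hgt : ¬ (2 * 3 ^ n + 0 ≤ 3 ^ n) := by omega
        have hle : 2 * 3 ^ n + 0 ≤ 2 * 3 ^ n := by omega
        simp only [tpts]
        rw [if_neg hgt, if_pos hle, show 2 * 3 ^ n + 0 - 3 ^ n = 3 ^ n by omega, P2.hn, P3.h0]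
      · have hgt1 : ¬ (2 * 3 ^ n + k ≤ 3 ^ n) := by omega
        have hgt2 : ¬ (2 * 3 ^ n + k ≤ 2 * 3 ^ n) := by omega
        simp only [tpts]
        rw [if_neg hgt1, if_neg hgt2]
        congr 1
        omega
    have hpow : 3 ^ (n + 1) = 2 * 3 ^ n + 3 ^ n := by
      rw [pow_succ]
      omega
    constructor
    · refine ⟨?_, ?_, ?_, hs, htT⟩
      · rw [e1 0 (by omega), P1.h0]
      · rw [hpow, e3 (3 ^ n) le_rfl, P3.hn]
      · intro k hk
        rw [hpow] at hk
        by_cases c1 : k < 3 ^ n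
        · rw [e1 k (by omega), e1 (k+1) (by omega)]
          exact P1.mono k c1
        · by_cases c2 : k < 2 * 3 ^ n
          · obtain ⟨j, rfl⟩ : ∃ j, k = 3 ^ n + j := ⟨k - 3 ^ n, by omega⟩
            rw [e2 j (by omega), show 3 ^ n + j + 1 = 3 ^ n + (j + 1) by omega,
              e2 (j+1) (by omega)]
            exact P2.mono j (by omega)
          · obtain ⟨j, rfl⟩ : ∃ j, k = 2 * 3 ^ n + j := ⟨k - 2 * 3 ^ n, by omega⟩
            rw [e3 j (by omega), show 2 * 3 ^ n + j + 1 = 2 * 3 ^ n + (j + 1) by omega,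
              e3 (j+1) (by omega)]
            exact P3.mono j (by omega)
    · intro k hk
      rw [hpow] at hk
      have hhalf : ∀ x : ℝ, x ≤ ω s t / 2 → x / 2 ^ n ≤ ω s t / 2 ^ (n + 1) := by
        intro x hx
        rw [show ω s t / 2 ^ (n+1) = (ω s t / 2) / 2 ^ n by
          rw [pow_succ]; ring]
        gcongr
      by_cases c1 : k < 3 ^ n
      · rw [e1 k (by omega), e1 (k+1) (by omega)]
        exact le_trans (M1 k c1) (hhalf _ hω1)
      · by_cases c2 : k < 2 * 3 ^ n
        · obtain ⟨j, rfl⟩ : ∃ j, k = 3 ^ n + j := ⟨k - 3 ^ n, by omega⟩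
          rw [e2 j (by omega), show 3 ^ n + j + 1 = 3 ^ n + (j + 1) by omega,
            e2 (j+1) (by omega)]
          exact le_trans (M2 j (by omega)) (hhalf _ hω2)
        · obtain ⟨j, rfl⟩ : ∃ j, k = 2 * 3 ^ n + j := ⟨k - 2 * 3 ^ n, by omega⟩
          rw [e3 j (by omega), show 2 * 3 ^ n + j + 1 = 2 * 3 ^ n + (j + 1) by omega,
            e3 (j+1) (by omega)]
          exact le_trans (M3 j (by omega)) (hhalf _ hω3)


include hnn hsup huv in
lemma tpts_blocks (n : ℕ) {s t : ℝ} (hs : 0 ≤ s) (hst : s ≤ t) (htT : t ≤ T) :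
    (∀ k, k ≤ 3 ^ n → tpts u v (n+1) s t k = tpts u v n s (u s t) k) ∧
    (∀ k, k ≤ 3 ^ n → tpts u v (n+1) s t (3 ^ n + k) = tpts u v n (u s t) (v s t) k) ∧
    (∀ k, k ≤ 3 ^ n → tpts u v (n+1) s t (2 * 3 ^ n + k) = tpts u v n (v s t) t k) := by
  obtain ⟨h1, h2, h3, hω1, hω2, hω3⟩ := huv s t hs hst htT
  have hua0 : 0 ≤ u s t := le_trans hs h1
  have huaT : u s t ≤ T := le_trans (le_trans h2 h3) htT
  have hva0 : 0 ≤ v s t := le_trans hua0 h2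
  have hvaT : v s t ≤ T := le_trans h3 htT
  obtain ⟨P1, _⟩ := tpts_good hnn hsup huv n s (u s t) hs h1 huaT
  obtain ⟨P2, _⟩ := tpts_good hnn hsup huv n (u s t) (v s t) hua0 h2 hvaT
  obtain ⟨P3, _⟩ := tpts_good hnn hsup huv n (v s t) t hva0 h3 htT
  refine ⟨?_, ?_, ?_⟩
  · intro k hk
    simp only [tpts]
    rw [if_pos hk]
  · intro k hk
    rcases Nat.eq_zero_or_pos k with rfl | hkpos
    · simp only [tpts, Nat.add_zero]
      rw [if_pos le_rfl, P1.hn, P2.h0]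
    · have hgt : ¬ (3 ^ n + k ≤ 3 ^ n) := by omega
      have hle : 3 ^ n + k ≤ 2 * 3 ^ n := by omega
      simp only [tpts]
      rw [if_neg hgt, if_pos hle]
      congr 1
      omega
  · intro k hk
    have h3n : 1 ≤ 3 ^ n := Nat.one_le_pow _ _ (by norm_num)
    rcases Nat.eq_zero_or_pos k with rfl | hkpos
    · have hgt : ¬ (2 * 3 ^ n + 0 ≤ 3 ^ n) := by omega
      have hle : 2 * 3 ^ n + 0 ≤ 2 * 3 ^ n := by omega
      simp only [tpts]
      rw [if_neg hgt, if_pos hle, show 2 * 3 ^ n + 0 - 3 ^ n = 3 ^ n by omega, P2.hn, P3.h0]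
    · have hgt1 : ¬ (2 * 3 ^ n + k ≤ 3 ^ n) := by omega
      have hgt2 : ¬ (2 * 3 ^ n + k ≤ 2 * 3 ^ n) := by omega
      simp only [tpts]
      rw [if_neg hgt1, if_neg hgt2]
      congr 1
      omega

include hnn hsup huv in
lemma tpts_RS_split (Ξ : ℝ → ℝ → V) (n : ℕ) {s t : ℝ}
    (hs : 0 ≤ s) (hst : s ≤ t) (htT : t ≤ T) :
    RS Ξ (tpts u v (n+1) s t) (3 ^ (n+1))
      = RS Ξ (tpts u v n s (u s t)) (3 ^ n)
        + RS Ξ (tpts u v n (u s t) (v s t)) (3 ^ n)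
        + RS Ξ (tpts u v n (v s t) t) (3 ^ n) := by
  obtain ⟨e1, e2, e3⟩ := tpts_blocks hnn hsup huv n hs hst htT
  set p := tpts u v (n+1) s t with hp
  set F : ℕ → V := fun k => Ξ (p k) (p (k + 1)) with hF
  have hpow : 3 ^ (n + 1) = 3 * 3 ^ n := by rw [pow_succ]; ring
  have hsplit : RS Ξ p (3 ^ (n+1))
      = (∑ k ∈ Ico 0 (3 ^ n), F k) + (∑ k ∈ Ico (3 ^ n) (2 * 3 ^ n), F k)
        + ∑ k ∈ Ico (2 * 3 ^ n) (3 * 3 ^ n), F k := by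
    rw [RS, range_eq_Ico, hpow,
      ← Finset.sum_Ico_consecutive F (by omega : 0 ≤ 2 * 3 ^ n) (by omega : 2 * 3 ^ n ≤ 3 * 3 ^ n),
      ← Finset.sum_Ico_consecutive F (by omega : 0 ≤ 3 ^ n) (by omega : 3 ^ n ≤ 2 * 3 ^ n)]
  rw [hsplit]
  congr 1
  · congr 1
    · rw [← range_eq_Ico, RS]
      apply Finset.sum_congr rfl
      intro k hk
      simp only [Finset.mem_range] at hk
      simp only [hF]
      rw [e1 k (by omega), e1 (k+1) (by omega)]
    · rw [Finset.sum_Ico_eq_sum_range, show 2 * 3 ^ n - 3 ^ n = 3 ^ n by omega, RS]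
      apply Finset.sum_congr rfl
      intro k hk
      simp only [Finset.mem_range] at hk
      simp only [hF]
      rw [show 3 ^ n + k + 1 = 3 ^ n + (k + 1) by omega, e2 k (by omega), e2 (k+1) (by omega)]
  · rw [Finset.sum_Ico_eq_sum_range, show 3 * 3 ^ n - 2 * 3 ^ n = 3 ^ n by omega, RS]
    apply Finset.sum_congr rfl
    intro k hk
    simp only [Finset.mem_range] at hk
    simp only [hF]
    rw [show 2 * 3 ^ n + k + 1 = 2 * 3 ^ n + (k + 1) by omega, e3 k (by omega), e3 (k+1) (by omega)]

omit hnn hsup in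
lemma tpts_RS_zero (Ξ : ℝ → ℝ → V) (s t : ℝ) :
    RS Ξ (tpts u v 0 s t) (3 ^ 0) = Ξ s t := by
  simp only [RS, pow_zero, Finset.sum_range_one, tpts]
  norm_num


omit hnn hsup in
include hθ in
lemma rpow_split_self {M : ℝ} (hM : 0 ≤ M) : M ^ θ = M ^ (θ - 1) * M := by
  have h := Real.rpow_add_of_nonneg hM (by linarith : (0:ℝ) ≤ θ - 1) zero_le_one
  rw [sub_add_cancel] at h
  rw [h, Real.rpow_one]

omit hnn hsup in
include hθ in
lemma rpow_child {x M : ℝ} (hx : 0 ≤ x) (hxM : x ≤ M / 2) :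
    x ^ θ ≤ (M / 2) ^ (θ - 1) * x := by
  rw [rpow_split_self hθ hx]
  apply mul_le_mul_of_nonneg_right _ hx
  exact Real.rpow_le_rpow hx hxM (by linarith)

omit hnn hsup in
include hθ in
lemma half_pow {M : ℝ} (hM : 0 ≤ M) :
    (M / 2) ^ (θ - 1) * M = M ^ θ * (2:ℝ) ^ (1 - θ) := by
  have h2pos : (0:ℝ) < 2 ^ (θ - 1) := Real.rpow_pos_of_pos (by norm_num) _
  rw [Real.div_rpow hM (by norm_num), show (1-θ) = -(θ-1) by ring,
    Real.rpow_neg (by norm_num : (0:ℝ) ≤ 2), rpow_split_self hθ hM]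
  field_simp

include hnn hsup hθ hC hΞ huv in
lemma phi_cauchy : ∀ n s t, 0 ≤ s → s ≤ t → t ≤ T →
    ‖RS Ξ (tpts u v (n+1) s t) (3 ^ (n+1)) - RS Ξ (tpts u v n s t) (3 ^ n)‖
      ≤ 2 * C * ω s t ^ θ * ((2:ℝ) ^ ((1:ℝ) - θ)) ^ n := by
  intro n
  induction n with
  | zero =>
    intro s t hs hst htT
    obtain ⟨h1, h2, h3, hω1, hω2, hω3⟩ := huv s t hs hst htT
    have hua0 : 0 ≤ u s t := le_trans hs h1
    have hvaT : v s t ≤ T := le_trans h3 htT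
    rw [tpts_RS_split hnn hsup huv Ξ 0 hs hst htT]
    simp only [tpts_RS_zero]
    have hX := hΞ s (v s t) t hs (le_trans h1 h2) h3 htT
    have hY := hΞ s (u s t) (v s t) hs h1 h2 hvaT
    have hkey : Ξ s (u s t) + Ξ (u s t) (v s t) + Ξ (v s t) t - Ξ s t
        = -((Ξ s t - Ξ s (v s t) - Ξ (v s t) t)
            + (Ξ s (v s t) - Ξ s (u s t) - Ξ (u s t) (v s t))) := by abel
    rw [hkey, norm_neg]
    have hωsv : ω s (v s t) ≤ ω s t :=
      omega_mono hnn hsup hs le_rfl (le_trans h1 h2) h3 htT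
    have hωsvnn : 0 ≤ ω s (v s t) := hnn s (v s t) hs (le_trans h1 h2) hvaT
    have hrpow : ω s (v s t) ^ θ ≤ ω s t ^ θ :=
      Real.rpow_le_rpow hωsvnn hωsv (by linarith)
    calc ‖(Ξ s t - Ξ s (v s t) - Ξ (v s t) t)
            + (Ξ s (v s t) - Ξ s (u s t) - Ξ (u s t) (v s t))‖
        ≤ ‖Ξ s t - Ξ s (v s t) - Ξ (v s t) t‖
          + ‖Ξ s (v s t) - Ξ s (u s t) - Ξ (u s t) (v s t)‖ := norm_add_le _ _
      _ ≤ C * ω s t ^ θ + C * ω s (v s t) ^ θ := add_le_add hX hY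
      _ ≤ 2 * C * ω s t ^ θ * ((2:ℝ) ^ ((1:ℝ) - θ)) ^ 0 := by
          rw [pow_zero, mul_one]
          have := mul_le_mul_of_nonneg_left hrpow hC
          linarith
  | succ n ih =>
    intro s t hs hst htT
    obtain ⟨h1, h2, h3, hω1, hω2, hω3⟩ := huv s t hs hst htT
    have hua0 : 0 ≤ u s t := le_trans hs h1
    have huaT : u s t ≤ T := le_trans (le_trans h2 h3) htT
    have hva0 : 0 ≤ v s t := le_trans hua0 h2
    have hvaT : v s t ≤ T := le_trans h3 htT
    rw [tpts_RS_split hnn hsup huv Ξ (n+1) hs hst htT,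
      tpts_RS_split hnn hsup huv Ξ n hs hst htT]
    have b1 := ih s (u s t) hs h1 huaT
    have b2 := ih (u s t) (v s t) hua0 h2 hvaT
    have b3 := ih (v s t) t hva0 h3 htT
    set r : ℝ := (2:ℝ) ^ ((1:ℝ) - θ) with hr
    have hrnn : 0 ≤ r := Real.rpow_nonneg (by norm_num) _
    have hrpnn : (0:ℝ) ≤ 2 * C * r ^ n := by positivity
    have hωsu : 0 ≤ ω s (u s t) := hnn _ _ hs h1 huaT
    have hωuv : 0 ≤ ω (u s t) (v s t) := hnn _ _ hua0 h2 hvaT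
    have hωvt : 0 ≤ ω (v s t) t := hnn _ _ hva0 h3 htT
    have hωst : 0 ≤ ω s t := hnn _ _ hs hst htT
    have hsum3 : ω s (u s t) + ω (u s t) (v s t) + ω (v s t) t ≤ ω s t := by
      have q1 := hsup s (u s t) (v s t) hs h1 h2 hvaT
      have q2 := hsup s (v s t) t hs (le_trans h1 h2) h3 htT
      linarith
    have c1 := rpow_child hθ hωsu hω1
    have c2 := rpow_child hθ hωuv hω2
    have c3 := rpow_child hθ hωvt hω3
    have hhalfnn : (0:ℝ) ≤ (ω s t / 2) ^ (θ - 1) := Real.rpow_nonneg (by linarith) _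
    calc ‖RS Ξ (tpts u v (n+1) s (u s t)) (3 ^ (n+1))
            + RS Ξ (tpts u v (n+1) (u s t) (v s t)) (3 ^ (n+1))
            + RS Ξ (tpts u v (n+1) (v s t) t) (3 ^ (n+1))
          - (RS Ξ (tpts u v n s (u s t)) (3 ^ n)
            + RS Ξ (tpts u v n (u s t) (v s t)) (3 ^ n)
            + RS Ξ (tpts u v n (v s t) t) (3 ^ n))‖
        ≤ ‖RS Ξ (tpts u v (n+1) s (u s t)) (3 ^ (n+1))
              - RS Ξ (tpts u v n s (u s t)) (3 ^ n)‖
          + ‖RS Ξ (tpts u v (n+1) (u s t) (v s t)) (3 ^ (n+1))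
              - RS Ξ (tpts u v n (u s t) (v s t)) (3 ^ n)‖
          + ‖RS Ξ (tpts u v (n+1) (v s t) t) (3 ^ (n+1))
              - RS Ξ (tpts u v n (v s t) t) (3 ^ n)‖ := by
          rw [show RS Ξ (tpts u v (n+1) s (u s t)) (3 ^ (n+1))
              + RS Ξ (tpts u v (n+1) (u s t) (v s t)) (3 ^ (n+1))
              + RS Ξ (tpts u v (n+1) (v s t) t) (3 ^ (n+1))
            - (RS Ξ (tpts u v n s (u s t)) (3 ^ n)
              + RS Ξ (tpts u v n (u s t) (v s t)) (3 ^ n)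
              + RS Ξ (tpts u v n (v s t) t) (3 ^ n))
            = (RS Ξ (tpts u v (n+1) s (u s t)) (3 ^ (n+1))
                - RS Ξ (tpts u v n s (u s t)) (3 ^ n))
              + ((RS Ξ (tpts u v (n+1) (u s t) (v s t)) (3 ^ (n+1))
                - RS Ξ (tpts u v n (u s t) (v s t)) (3 ^ n))
              + (RS Ξ (tpts u v (n+1) (v s t) t) (3 ^ (n+1))
                - RS Ξ (tpts u v n (v s t) t) (3 ^ n))) from by abel]
          refine le_trans (norm_add_le _ _) ?_
          have := norm_add_le (RS Ξ (tpts u v (n+1) (u s t) (v s t)) (3 ^ (n+1))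
                - RS Ξ (tpts u v n (u s t) (v s t)) (3 ^ n))
              (RS Ξ (tpts u v (n+1) (v s t) t) (3 ^ (n+1))
                - RS Ξ (tpts u v n (v s t) t) (3 ^ n))
          linarith
      _ ≤ 2 * C * ω s (u s t) ^ θ * r ^ n + 2 * C * ω (u s t) (v s t) ^ θ * r ^ n
            + 2 * C * ω (v s t) t ^ θ * r ^ n := by
          exact add_le_add (add_le_add b1 b2) b3
      _ = 2 * C * r ^ n
            * (ω s (u s t) ^ θ + ω (u s t) (v s t) ^ θ + ω (v s t) t ^ θ) := by ring
      _ ≤ 2 * C * r ^ n * ((ω s t / 2) ^ (θ - 1)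
            * (ω s (u s t) + ω (u s t) (v s t) + ω (v s t) t)) := by
          apply mul_le_mul_of_nonneg_left _ hrpnn
          calc ω s (u s t) ^ θ + ω (u s t) (v s t) ^ θ + ω (v s t) t ^ θ
              ≤ (ω s t / 2) ^ (θ - 1) * ω s (u s t) + (ω s t / 2) ^ (θ - 1) * ω (u s t) (v s t)
                + (ω s t / 2) ^ (θ - 1) * ω (v s t) t := add_le_add (add_le_add c1 c2) c3
            _ = (ω s t / 2) ^ (θ - 1)
                * (ω s (u s t) + ω (u s t) (v s t) + ω (v s t) t) := by ring
      _ ≤ 2 * C * r ^ n * ((ω s t / 2) ^ (θ - 1) * ω s t) := by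
          apply mul_le_mul_of_nonneg_left _ hrpnn
          exact mul_le_mul_of_nonneg_left hsum3 hhalfnn
      _ = 2 * C * ω s t ^ θ * r ^ (n + 1) := by
          rw [half_pow hθ hωst, ← hr, pow_succ]
          ring


omit hnn hsup in
include hθ in
lemma const_algebra (x : ℝ) :
    2 * x / (1 - (2:ℝ) ^ ((1:ℝ) - θ)) = 2 ^ θ / (2 ^ (θ - 1) - 1) * x := by
  have h2 : (0:ℝ) < 2 := by norm_num
  have e1 : (2:ℝ) ^ ((1:ℝ) - θ) * 2 ^ (θ - 1) = 1 := by
    rw [← Real.rpow_add h2]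
    norm_num
  have e2 : (2:ℝ) ^ θ = 2 * 2 ^ (θ - 1) := by
    rw [show θ = 1 + (θ - 1) by ring, Real.rpow_add h2, Real.rpow_one]
    ring_nf
  have hlt : (2:ℝ) ^ ((1:ℝ) - θ) < 1 :=
    Real.rpow_lt_one_of_one_lt_of_neg (by norm_num) (by linarith)
  have hgt : (1:ℝ) < 2 ^ (θ - 1) := by
    nlinarith [Real.rpow_pos_of_pos h2 ((1:ℝ) - θ), Real.rpow_pos_of_pos h2 (θ - 1)]
  have hApos : (0:ℝ) < 2 ^ (θ - 1) := Real.rpow_pos_of_pos h2 _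
  have hq1 : (1 - (2:ℝ) ^ ((1:ℝ) - θ)) * 2 ^ (θ - 1) = 2 ^ (θ - 1) - 1 := by
    rw [sub_mul, one_mul, e1]
  rw [show (2:ℝ) * x / (1 - 2 ^ ((1:ℝ) - θ))
      = 2 * x * 2 ^ (θ - 1) / ((1 - 2 ^ ((1:ℝ) - θ)) * 2 ^ (θ - 1)) from
    (mul_div_mul_right _ _ (ne_of_gt hApos)).symm, hq1, e2]
  ring

include hnn hsup in
lemma concat_lemma (Ξ : ℝ → ℝ → V) {p q : ℕ → ℝ} {n m : ℕ} {a b c ε : ℝ}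
    (hp : IsPart T p n a b) (hq : IsPart T q m b c)
    (hmp : ∀ k, k < n → ω (p k) (p (k + 1)) ≤ ε)
    (hmq : ∀ k, k < m → ω (q k) (q (k + 1)) ≤ ε) :
    ∃ ρ : ℕ → ℝ, IsPart T ρ (n + m) a c ∧
      (∀ k, k < n + m → ω (ρ k) (ρ (k + 1)) ≤ ε) ∧
      RS Ξ ρ (n + m) = RS Ξ p n + RS Ξ q m := by
  classical
  set ρ : ℕ → ℝ := fun k => if k ≤ n then p k else q (k - n) with hρ
  have hbq : q 0 = b := hq.h0
  have hρq : ∀ j, 0 < j → j ≤ m → ρ (n + j) = q j := by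
    intro j hj0 hjm
    have hni : ¬ (n + j ≤ n) := by omega
    simp only [hρ, if_neg hni]
    congr 1
    omega
  have hρq' : ∀ j, j ≤ m → ρ (n + j) = q j := by
    intro j hjm
    rcases Nat.eq_zero_or_pos j with rfl | hj0
    · simp only [hρ, Nat.add_zero, if_pos le_rfl, hp.hn, hbq]
    · exact hρq j hj0 hjm
  have hρp : ∀ k, k ≤ n → ρ k = p k := by
    intro k hk
    simp only [hρ, if_pos hk]
  have hpart : IsPart T ρ (n + m) a c := by
    refine ⟨?_, ?_, ?_, hp.ha, hq.hb⟩
    · rw [hρp 0 (by omega), hp.h0]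
    · rw [hρq' m le_rfl, hq.hn]
    · intro k hk
      by_cases c1 : k + 1 ≤ n
      · rw [hρp k (by omega), hρp (k+1) c1]
        exact hp.mono k (by omega)
      · by_cases c2 : k ≤ n
        · have hkn : k = n := by omega
          subst hkn
          rw [hρp k le_rfl, show k + 1 = k + 1 from rfl]
          rw [show ρ (k + 1) = q 1 from by
            have := hρq 1 (by omega) (by omega)
            rw [← this]]
          rw [hp.hn, ← hbq]
          exact hq.mono 0 (by omega)
        · obtain ⟨j, rfl⟩ : ∃ j, k = n + j := ⟨k - n, by omega⟩
          rw [hρq' j (by omega), show n + j + 1 = n + (j + 1) by omega, hρq' (j+1) (by omega)]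
          exact hq.mono j (by omega)
  refine ⟨ρ, hpart, ?_, ?_⟩
  · intro k hk
    by_cases c1 : k + 1 ≤ n
    · rw [hρp k (by omega), hρp (k+1) c1]
      exact hmp k (by omega)
    · by_cases c2 : k ≤ n
      · have hkn : k = n := by omega
        subst hkn
        rw [hρp k le_rfl, hp.hn, ← hbq,
          show ρ (k + 1) = q 1 from by
            have := hρq 1 (by omega) (by omega)
            rw [← this]]
        exact hmq 0 (by omega)
      · obtain ⟨j, rfl⟩ : ∃ j, k = n + j := ⟨k - n, by omega⟩
        rw [hρq' j (by omega), show n + j + 1 = n + (j + 1) by omega, hρq' (j+1) (by omega)]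
        exact hmq j (by omega)
  · rw [RS, range_eq_Ico,
      ← Finset.sum_Ico_consecutive _ (by omega : 0 ≤ n) (by omega : n ≤ n + m)]
    congr 1
    · rw [← range_eq_Ico, RS]
      apply Finset.sum_congr rfl
      intro k hk
      simp only [Finset.mem_range] at hk
      rw [hρp k (by omega), hρp (k+1) (by omega)]
    · rw [Finset.sum_Ico_eq_sum_range, show n + m - n = m by omega, RS]
      apply Finset.sum_congr rfl
      intro j hj
      simp only [Finset.mem_range] at hj
      rw [hρq' j (by omega), show n + j + 1 = n + (j + 1) by omega, hρq' (j+1) (by omega)]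


omit hnn hsup in
include hθ in
lemma tendsto_mesh {M : ℝ} (hM : 0 ≤ M) :
    Filter.Tendsto (fun n : ℕ => (M / 2 ^ n) ^ (θ - 1)) Filter.atTop (nhds 0) := by
  have hq0 : (0:ℝ) ≤ (2:ℝ) ^ ((1:ℝ) - θ) := Real.rpow_nonneg (by norm_num) _
  have hq1 : (2:ℝ) ^ ((1:ℝ) - θ) < 1 :=
    Real.rpow_lt_one_of_one_lt_of_neg (by norm_num) (by linarith)
  have he : ∀ n : ℕ, (M / 2 ^ n) ^ (θ - 1) = M ^ (θ - 1) * ((2:ℝ) ^ ((1:ℝ) - θ)) ^ n := by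
    intro n
    rw [Real.div_rpow hM (by positivity), ← Real.rpow_natCast (2:ℝ) n,
      ← Real.rpow_natCast ((2:ℝ) ^ ((1:ℝ) - θ)) n,
      ← Real.rpow_mul (by norm_num : (0:ℝ) ≤ 2), ← Real.rpow_mul (by norm_num : (0:ℝ) ≤ 2),
      div_eq_mul_inv, ← Real.rpow_neg (by norm_num : (0:ℝ) ≤ 2),
      show -((n:ℝ) * (θ - 1)) = ((1:ℝ) - θ) * (n:ℝ) by ring]
  simp only [he]
  rw [show (0:ℝ) = M ^ (θ - 1) * 0 by ring]
  exact (tendsto_pow_atTop_nhds_zero_of_lt_one hq0 hq1).const_mul _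


omit hnn hsup in
include hθ in
lemma two_rpow_gt : (1:ℝ) < 2 ^ (θ - 1) := by
  have h2 : (0:ℝ) < 2 := by norm_num
  have e1 : (2:ℝ) ^ ((1:ℝ) - θ) * 2 ^ (θ - 1) = 1 := by
    rw [← Real.rpow_add h2]
    norm_num
  have hlt : (2:ℝ) ^ ((1:ℝ) - θ) < 1 :=
    Real.rpow_lt_one_of_one_lt_of_neg (by norm_num) (by linarith)
  nlinarith [Real.rpow_pos_of_pos h2 ((1:ℝ) - θ), Real.rpow_pos_of_pos h2 (θ - 1)]

end Main

end SewingProof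


open SewingProof

/-- Additive sewing lemma: a germ `Ξ` whose additivity defect is bounded by
`C ω^θ` with `θ > 1` is approximated by a unique genuine additive path `I`
vanishing at `0`, with `|I_t − I_s − Ξ(s,t)| ≤ K C ω(s,t)^θ`,
`K = 2^θ/(2^{θ−1} − 1)`. -/
theorem additive_sewing_lemma
    {V : Type*} [NormedAddCommGroup V] [NormedSpace ℝ V] [CompleteSpace V]
    (T θ C : ℝ) (hT : 0 < T) (hθ : 1 < θ) (hC : 0 ≤ C)
    (ω : ℝ → ℝ → ℝ)
    (hω_nonneg : ∀ s t, 0 ≤ s → s ≤ t → t ≤ T → 0 ≤ ω s t)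
    (hω_superadd : ∀ r s t, 0 ≤ r → r ≤ s → s ≤ t → t ≤ T →
      ω r s + ω s t ≤ ω r t)
    (hω_diag : ∀ t, 0 ≤ t → t ≤ T → ω t t = 0)
    (hω_cont : ∀ t ∈ Set.Icc (0 : ℝ) T,
      Filter.Tendsto (fun p : ℝ × ℝ => ω p.1 p.2)
        (nhdsWithin (t, t) {p : ℝ × ℝ | 0 ≤ p.1 ∧ p.1 ≤ p.2 ∧ p.2 ≤ T})
        (nhds 0))
    (Ξ : ℝ → ℝ → V)
    (hΞ : ∀ r s t, 0 ≤ r → r ≤ s → s ≤ t → t ≤ T →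
      ‖Ξ r t - Ξ r s - Ξ s t‖ ≤ C * ω r t ^ θ) :
    ∃ I : ℝ → V, I 0 = 0 ∧
      (∀ s t, 0 ≤ s → s ≤ t → t ≤ T →
        ‖I t - I s - Ξ s t‖ ≤ 2 ^ θ / (2 ^ (θ - 1) - 1) * C * ω s t ^ θ) ∧
      ∀ J : ℝ → V, J 0 = 0 →
        (∀ s t, 0 ≤ s → s ≤ t → t ≤ T →
          ‖J t - J s - Ξ s t‖ ≤ 2 ^ θ / (2 ^ (θ - 1) - 1) * C * ω s t ^ θ) →
        ∀ t ∈ Set.Icc (0 : ℝ) T, J t = I t := by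
  classical
  have hΞ0 : ∀ a : ℝ, 0 ≤ a → a ≤ T → Ξ a a = 0 := by
    intro a ha haT
    have h := hΞ a a a ha le_rfl le_rfl haT
    rw [hω_diag a ha haT, Real.zero_rpow (by positivity : θ ≠ 0), mul_zero] at h
    have e : Ξ a a - Ξ a a - Ξ a a = -Ξ a a := by abel
    rw [e, norm_neg] at h
    exact norm_le_zero_iff.1 h
  obtain hsplit := split_exists hω_nonneg hω_superadd hω_diag hω_cont
  choose uu vv huv using hsplit
  set Φ : ℕ → ℝ → ℝ → V := fun n s t => RS Ξ (tpts uu vv n s t) (3 ^ n) with hΦ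
  set q : ℝ := (2:ℝ) ^ ((1:ℝ) - θ) with hq
  have hq0 : 0 ≤ q := Real.rpow_nonneg (by norm_num) _
  have hq1 : q < 1 := Real.rpow_lt_one_of_one_lt_of_neg (by norm_num) (by linarith)
  have hcau : ∀ s t, 0 ≤ s → s ≤ t → t ≤ T → ∀ n,
      dist (Φ n s t) (Φ (n+1) s t) ≤ (2 * C * ω s t ^ θ) * q ^ n := by
    intro s t hs hst htT n
    rw [dist_eq_norm, norm_sub_rev]
    have h := phi_cauchy hω_nonneg hω_superadd hθ hC hΞ huv n s t hs hst htT
    calc ‖Φ (n+1) s t - Φ n s t‖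
        = ‖RS Ξ (tpts uu vv (n+1) s t) (3 ^ (n+1)) - RS Ξ (tpts uu vv n s t) (3 ^ n)‖ := rfl
      _ ≤ 2 * C * ω s t ^ θ * ((2:ℝ) ^ ((1:ℝ) - θ)) ^ n := h
      _ = (2 * C * ω s t ^ θ) * q ^ n := by rw [hq]
  have hlim : ∀ s t : ℝ, ∃ L : V, 0 ≤ s → s ≤ t → t ≤ T →
      Filter.Tendsto (fun n => Φ n s t) Filter.atTop (nhds L) := by
    intro s t
    by_cases hdom : 0 ≤ s ∧ s ≤ t ∧ t ≤ T
    · obtain ⟨hs, hst, htT⟩ := hdom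
      obtain ⟨L, hL⟩ := cauchySeq_tendsto_of_complete
        (cauchySeq_of_le_geometric q _ hq1 (hcau s t hs hst htT))
      exact ⟨L, fun _ _ _ => hL⟩
    · exact ⟨0, fun h1 h2 h3 => absurd ⟨h1, h2, h3⟩ hdom⟩
  choose Iω hIω using hlim
  have hbound : ∀ s t, 0 ≤ s → s ≤ t → t ≤ T →
      ‖Ξ s t - Iω s t‖ ≤ 2 ^ θ / (2 ^ (θ - 1) - 1) * C * ω s t ^ θ := by
    intro s t hs hst htT
    have hd := dist_le_of_le_geometric_of_tendsto₀ q (2 * C * ω s t ^ θ) hq1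
      (hcau s t hs hst htT) (hIω s t hs hst htT)
    have hΦ0 : Φ 0 s t = Ξ s t := tpts_RS_zero Ξ s t
    rw [hΦ0, dist_eq_norm] at hd
    calc ‖Ξ s t - Iω s t‖ ≤ (2 * C * ω s t ^ θ) / (1 - q) := hd
      _ = 2 * (C * ω s t ^ θ) / (1 - (2:ℝ) ^ ((1:ℝ) - θ)) := by rw [hq]; ring_nf
      _ = 2 ^ θ / (2 ^ (θ - 1) - 1) * (C * ω s t ^ θ) := const_algebra hθ _
      _ = 2 ^ θ / (2 ^ (θ - 1) - 1) * C * ω s t ^ θ := by ring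
  have hIdiag : ∀ s : ℝ, 0 ≤ s → s ≤ T → Iω s s = 0 := by
    intro s hs hsT
    have hzero : ∀ n, Φ n s s = 0 := by
      intro n
      obtain ⟨P, _⟩ := tpts_good hω_nonneg hω_superadd huv n s s hs le_rfl hsT
      simp only [hΦ, RS]
      apply Finset.sum_eq_zero
      intro k hk
      simp only [Finset.mem_range] at hk
      have e1 : tpts uu vv n s s k = s :=
        le_antisymm (P.upper (by omega)) (P.lower (by omega))
      have e2 : tpts uu vv n s s (k+1) = s :=
        le_antisymm (P.upper (by omega)) (P.lower (by omega))
      rw [e1, e2, hΞ0 s hs hsT]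
    have h1 := hIω s s hs le_rfl hsT
    simp only [hzero] at h1
    exact tendsto_nhds_unique h1 tendsto_const_nhds
  have hadd : ∀ a b c : ℝ, 0 ≤ a → a ≤ b → b ≤ c → c ≤ T →
      Iω a c = Iω a b + Iω b c := by
    intro a b c ha hab hbc hcT
    have hac : a ≤ c := le_trans hab hbc
    have hωac : 0 ≤ ω a c := hω_nonneg a c ha hac hcT
    have hbT : b ≤ T := le_trans hbc hcT
    have key : ∀ n : ℕ, ‖Φ n a c - (Φ n a b + Φ n b c)‖
        ≤ 2 * (2 ^ θ * Bθ θ * C) * ((ω a c / 2 ^ n) ^ (θ - 1) * ω a c) := by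
      intro n
      obtain ⟨Pac, Mac⟩ := tpts_good hω_nonneg hω_superadd huv n a c ha hac hcT
      obtain ⟨Pab, Mab⟩ := tpts_good hω_nonneg hω_superadd huv n a b ha hab hbT
      obtain ⟨Pbc, Mbc⟩ :=
        tpts_good hω_nonneg hω_superadd huv n b c (le_trans ha hab) hbc hcT
      have hωab : ω a b ≤ ω a c :=
        omega_mono hω_nonneg hω_superadd ha le_rfl hab hbc hcT
      have hωbc : ω b c ≤ ω a c :=
        omega_mono hω_nonneg hω_superadd ha hab hbc le_rfl hcT
      have hMab : ∀ k, k < 3 ^ n →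
          ω (tpts uu vv n a b k) (tpts uu vv n a b (k + 1)) ≤ ω a c / 2 ^ n :=
        fun k hk => le_trans (Mab k hk) (by gcongr)
      have hMbc : ∀ k, k < 3 ^ n →
          ω (tpts uu vv n b c k) (tpts uu vv n b c (k + 1)) ≤ ω a c / 2 ^ n :=
        fun k hk => le_trans (Mbc k hk) (by gcongr)
      obtain ⟨ρ, hρpart, hρmesh, hρRS⟩ :=
        concat_lemma hω_nonneg hω_superadd Ξ Pab Pbc hMab hMbc
      have hcomp := two_partitions_bound hω_nonneg hω_superadd hθ hC hω_diag hΞ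
        Pac hρpart (by positivity) Mac hρmesh
      rw [hρRS] at hcomp
      exact hcomp
    have hto : Filter.Tendsto (fun n => Φ n a c - (Φ n a b + Φ n b c)) Filter.atTop
        (nhds (Iω a c - (Iω a b + Iω b c))) :=
      (hIω a c ha hac hcT).sub ((hIω a b ha hab hbT).add (hIω b c (le_trans ha hab) hbc hcT))
    have hgz : Filter.Tendsto
        (fun n : ℕ => 2 * (2 ^ θ * Bθ θ * C) * ((ω a c / 2 ^ n) ^ (θ - 1) * ω a c))
        Filter.atTop (nhds 0) := by
      have h1 := tendsto_mesh hθ (M := ω a c) hωac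
      have h2 := (h1.mul_const (ω a c)).const_mul (2 * (2 ^ θ * Bθ θ * C))
      simpa using h2
    have hz : Filter.Tendsto (fun n => Φ n a c - (Φ n a b + Φ n b c))
        Filter.atTop (nhds 0) := squeeze_zero_norm key hgz
    exact sub_eq_zero.1 (tendsto_nhds_unique hto hz)
  have hmain : ∀ s t, 0 ≤ s → s ≤ t → t ≤ T →
      ‖Iω 0 t - Iω 0 s - Ξ s t‖ ≤ 2 ^ θ / (2 ^ (θ - 1) - 1) * C * ω s t ^ θ := by
    intro s t hs hst htT
    calc ‖Iω 0 t - Iω 0 s - Ξ s t‖ = ‖Ξ s t - Iω s t‖ := by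
          rw [show Iω 0 t - Iω 0 s - Ξ s t = -(Ξ s t - Iω s t) from by
            rw [hadd 0 s t le_rfl hs hst htT]; abel, norm_neg]
      _ ≤ _ := hbound s t hs hst htT
  refine ⟨fun t => Iω 0 t, hIdiag 0 le_rfl (le_of_lt hT), hmain, ?_⟩
  intro J hJ0 hJ t ht
  obtain ⟨ht0, htT⟩ := ht
  show J t = Iω 0 t
  set K : ℝ := 2 ^ θ / (2 ^ (θ - 1) - 1) * C with hK
  have hKnn : 0 ≤ K := by
    have := two_rpow_gt hθ
    have h1 : (0:ℝ) ≤ (2:ℝ) ^ θ := Real.rpow_nonneg (by norm_num) θ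
    apply mul_nonneg _ hC
    apply div_nonneg h1 (by linarith)
  have hDinc : ∀ x y, 0 ≤ x → x ≤ y → y ≤ T →
      ‖(J y - Iω 0 y) - (J x - Iω 0 x)‖ ≤ 2 * K * ω x y ^ θ := by
    intro x y hx hxy hyT
    have h1 := hJ x y hx hxy hyT
    have h2 := hmain x y hx hxy hyT
    calc ‖(J y - Iω 0 y) - (J x - Iω 0 x)‖
        = ‖(J y - J x - Ξ x y) - (Iω 0 y - Iω 0 x - Ξ x y)‖ := by congr 1; abel
      _ ≤ ‖J y - J x - Ξ x y‖ + ‖Iω 0 y - Iω 0 x - Ξ x y‖ := norm_sub_le _ _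
      _ ≤ 2 * K * ω x y ^ θ := by
          rw [hK, show (2:ℝ) * (2 ^ θ / (2 ^ (θ - 1) - 1) * C) * ω x y ^ θ
            = 2 ^ θ / (2 ^ (θ - 1) - 1) * C * ω x y ^ θ
              + 2 ^ θ / (2 ^ (θ - 1) - 1) * C * ω x y ^ θ by ring]
          exact add_le_add h1 h2
  have hω0t : 0 ≤ ω 0 t := hω_nonneg 0 t le_rfl ht0 htT
  have hDt : ∀ n : ℕ, ‖(J t - Iω 0 t) - (J 0 - Iω 0 0)‖
      ≤ 2 * K * ((ω 0 t / 2 ^ n) ^ (θ - 1) * ω 0 t) := by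
    intro n
    obtain ⟨P, M⟩ := tpts_good hω_nonneg hω_superadd huv n 0 t le_rfl ht0 htT
    set p := tpts uu vv n 0 t with hp
    have htel : (J t - Iω 0 t) - (J 0 - Iω 0 0)
        = ∑ k ∈ Finset.range (3 ^ n),
            ((J (p (k+1)) - Iω 0 (p (k+1))) - (J (p k) - Iω 0 (p k))) := by
      rw [Finset.sum_range_sub (fun k => J (p k) - Iω 0 (p k))]
      rw [P.hn, P.h0]
    rw [htel]
    calc ‖∑ k ∈ Finset.range (3 ^ n),
            ((J (p (k+1)) - Iω 0 (p (k+1))) - (J (p k) - Iω 0 (p k)))‖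
        ≤ ∑ k ∈ Finset.range (3 ^ n),
            ‖(J (p (k+1)) - Iω 0 (p (k+1))) - (J (p k) - Iω 0 (p k))‖ := norm_sum_le _ _
      _ ≤ ∑ k ∈ Finset.range (3 ^ n), 2 * K * ω (p k) (p (k+1)) ^ θ := by
          apply Finset.sum_le_sum
          intro k hk
          simp only [Finset.mem_range] at hk
          exact hDinc (p k) (p (k+1)) (P.pos (by omega)) (P.mono k hk) (P.le_T (by omega))
      _ = 2 * K * ∑ k ∈ Finset.range (3 ^ n), ω (p k) (p (k+1)) ^ θ := by
          rw [Finset.mul_sum]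
      _ ≤ 2 * K * ((ω 0 t / 2 ^ n) ^ (θ - 1) * ω 0 t) := by
          apply mul_le_mul_of_nonneg_left _ (by linarith)
          exact mesh_sum hω_nonneg hω_superadd hθ P M (by positivity)
  have hgz : Filter.Tendsto
      (fun n : ℕ => 2 * K * ((ω 0 t / 2 ^ n) ^ (θ - 1) * ω 0 t))
      Filter.atTop (nhds 0) := by
    have h1 := tendsto_mesh hθ (M := ω 0 t) hω0t
    have h2 := (h1.mul_const (ω 0 t)).const_mul (2 * K)
    simpa using h2
  have hfin : ‖(J t - Iω 0 t) - (J 0 - Iω 0 0)‖ ≤ 0 :=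
    ge_of_tendsto hgz (Filter.Eventually.of_forall hDt)
  rw [hJ0, hIdiag 0 le_rfl (le_of_lt hT), sub_zero, sub_zero] at hfin
  have := norm_le_zero_iff.1 hfin
  exact sub_eq_zero.1 this
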